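/- Consider the path-building game on a finite simple graph G in which the first player chooses a starting vertex and players alternately extend a simple path; a player unable to move loses. If there is a vertex v of G such that the induced subgraph on V(G) \ {v} admits a perfect matching, then the first player has a winning strategy (starting at v). -/

import Mathlib

/-- `moveWins G k l` : in the path-building game on `G` where the (reversed) list of
already-chosen vertices is `l` (head = last chosen vertex), the player whose turn it is
to move can force a win within `k` further moves. -/
def moveWins {V : Type*} (G : SimpleGraph V) : ℕ → List V → Prop
  | 0, _ => False
  | k + 1, l => ∃ v w, l.head? = some v ∧ G.Adj v w ∧ w ∉ l ∧ ¬ moveWins G k (w :: l)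

/-- If the subgraph of `G` induced on the complement of some vertex `v` has a perfect
matching, then the first player wins the path-building game by starting at `v`
(i.e. the second player, to move after `[v]`, cannot force a win). -/
theorem stmt12 {V : Type*} [Fintype V] (G : SimpleGraph V) (v : V)
    (M : (G.induce {u : V | u ≠ v}).Subgraph) (hM : M.IsPerfectMatching) :
    ¬ moveWins G (Fintype.card V) [v] := by
  classical
  have hex : ∀ u : ↥{u : V | u ≠ v}, ∃ w, M.Adj u w ∧ ∀ y, M.Adj u y → y = w :=
    fun u => hM.1 (hM.2 u)
  choose f hf huniq using hex
  have finv : ∀ u, f (f u) = u := fun u => (huniq (f u) u ((hf u).symm)).symm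
  have key : ∀ k, ∀ l : List V, l.Nodup → v ∈ l →
      (∀ u (h : u ∈ {u : V | u ≠ v}), u ∈ l → (f ⟨u, h⟩ : ↥{u : V | u ≠ v}).1 ∈ l) →
      k + l.length = Fintype.card V + 1 → ¬ moveWins G k l := by
    intro k
    induction k using Nat.strong_induction_on with
    | _ k IH =>
      intro l hnd hvl hpair hlen hwin
      match k, hwin with
      | k' + 1, ⟨a, w, hhead, hadj, hwl, hnot⟩ =>
        apply hnot
        have hwv : w ≠ v := fun h => hwl (h ▸ hvl)
        have hwS : w ∈ {u : V | u ≠ v} := hwv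
        set w' : V := (f ⟨w, hwS⟩ : ↥{u : V | u ≠ v}).1 with hw'def
        have hw'S : w' ≠ v := (f ⟨w, hwS⟩).2
        -- length bound
        have hnd2 : (w :: l).Nodup := List.nodup_cons.2 ⟨hwl, hnd⟩
        have hlen2 : (w :: l).length ≤ Fintype.card V := hnd2.length_le_card
        have hk' : 1 ≤ k' := by
          simp only [List.length_cons] at hlen2
          omega
        obtain ⟨k'', rfl⟩ : ∃ k'', k' = k'' + 1 := ⟨k' - 1, by omega⟩
        -- player 1 responds with w'
        refine ⟨w, w', rfl, ?_, ?_, ?_⟩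
        · -- G.Adj w w'
          have := M.adj_sub (hf ⟨w, hwS⟩)
          exact this
        · -- w' ∉ w :: l
          have hw'w : w' ≠ w := by
            intro h
            have : (f ⟨w, hwS⟩) = ⟨w, hwS⟩ := Subtype.ext h
            exact (hf ⟨w, hwS⟩).ne (by rw [this])
          intro hmem
          rcases List.mem_cons.1 hmem with h | h
          · exact hw'w h
          · -- w' ∈ l: then its partner w ∈ l, contradiction
            have := hpair w' hw'S h
            have heq : (⟨w', hw'S⟩ : ↥{u : V | u ≠ v}) = f ⟨w, hwS⟩ := Subtype.ext rfl
            rw [heq, finv] at this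
            exact hwl this
        · -- induction
          have hw'w : w' ≠ w := by
            intro h
            have : (f ⟨w, hwS⟩) = ⟨w, hwS⟩ := Subtype.ext h
            exact (hf ⟨w, hwS⟩).ne (by rw [this])
          have hw'notl : w' ∉ l := by
            intro h
            have := hpair w' hw'S h
            have heq : (⟨w', hw'S⟩ : ↥{u : V | u ≠ v}) = f ⟨w, hwS⟩ := Subtype.ext rfl
            rw [heq, finv] at this
            exact hwl this
          apply IH k'' (by omega) (w' :: w :: l)
          · exact List.nodup_cons.2 ⟨by simp [hw'w, hw'notl], hnd2⟩
          · exact List.mem_cons.2 (Or.inr (List.mem_cons.2 (Or.inr hvl)))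
          · intro u hu humem
            rcases List.mem_cons.1 humem with h | h
            · have heq : (⟨u, hu⟩ : ↥{u : V | u ≠ v}) = f ⟨w, hwS⟩ := Subtype.ext h
              rw [heq, finv]
              exact List.mem_cons.2 (Or.inr List.mem_cons_self)
            · rcases List.mem_cons.1 h with h | h
              · have heq : (⟨u, hu⟩ : ↥{u : V | u ≠ v}) = ⟨w, hwS⟩ := Subtype.ext h
                rw [heq]
                exact List.mem_cons_self
              · have := hpair u hu h
                exact List.mem_cons.2 (Or.inr (List.mem_cons.2 (Or.inr this)))
          · simp only [List.length_cons] at hlen ⊢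
            omega
  apply key (Fintype.card V) [v]
  · exact List.nodup_singleton v
  · exact List.mem_singleton.2 rfl
  · intro u hu humem
    exact absurd (List.mem_singleton.1 humem) hu
  · simp
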